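/- If R is a commutative Noetherian ring with identity of Krull dimension d, then sdim(R) ≤ d; that is, R satisfies the stable range condition (R_{d+1}): for every unimodular row (a₁,…,a_{d+2}) ∈ Um_{d+2}(R) there exist x₁,…,x_{d+1} ∈ R such that (a₁+a_{d+2}x₁)R + ⋯ + (a_{d+1}+a_{d+2}x_{d+1})R = R. -/

import Mathlib

/-- A row `a` over a (possibly noncommutative) ring `R` is unimodular if
`a₁R + ⋯ + aₙR = R`, i.e. there are `bᵢ` with `∑ aᵢ bᵢ = 1`. -/
def IsUnimodularRow {R : Type*} [Ring R] {n : ℕ} (a : Fin n → R) : Prop :=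
  ∃ b : Fin n → R, ∑ i, a i * b i = 1

/-- Bass's stable range condition `(R_m)`: for every unimodular row
`(a₁, …, a_{m+1})` there exist `x₁, …, x_m` with
`(a₁ + a_{m+1}x₁)R + ⋯ + (a_m + a_{m+1}x_m)R = R`. -/
def SatisfiesStableRange (R : Type*) [Ring R] (m : ℕ) : Prop :=
  ∀ a : Fin (m + 1) → R, IsUnimodularRow a →
    ∃ x : Fin m → R,
      IsUnimodularRow (fun i : Fin m => a i.castSucc + a (Fin.last m) * x i)

lemma my_minimalPrimes_finite {R : Type*} [CommRing R] [IsNoetherianRing R] (I : Ideal R) :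
    I.minimalPrimes.Finite := by
  rw [Ideal.minimalPrimes_eq_comap]
  exact (minimalPrimes.finite_of_isNoetherianRing (R ⧸ I)).image _

/-- Coset prime-avoidance: given finitely many pairwise incomparable primes none of which
contains `b`, one can translate `a` by a multiple of `b` to avoid all of them. -/
lemma my_avoid {R : Type*} [CommRing R] (b a : R) :
    ∀ S : Finset (Ideal R), (∀ P ∈ S, P.IsPrime) →
      (∀ P ∈ S, ∀ Q ∈ S, P ≠ Q → ¬P ≤ Q) → (∀ P ∈ S, b ∉ P) →
      ∃ t : R, ∀ P ∈ S, a + b * t ∉ P := by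
  classical
  intro S
  induction S using Finset.induction_on with
  | empty => exact fun _ _ _ => ⟨0, by simp⟩
  | @insert P S hPS ih =>
    intro hprime hinc hb
    obtain ⟨t, ht⟩ := ih (fun Q hQ => hprime Q (Finset.mem_insert_of_mem hQ))
      (fun Q hQ Q' hQ' hne => hinc Q (Finset.mem_insert_of_mem hQ) Q'
        (Finset.mem_insert_of_mem hQ') hne)
      (fun Q hQ => hb Q (Finset.mem_insert_of_mem hQ))
    haveI hPp : P.IsPrime := hprime P (Finset.mem_insert_self _ _)
    by_cases hcase : a + b * t ∈ P
    · -- pick an element of all `Q ∈ S` not in `P`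
      have hQP : ∀ Q ∈ S, ∃ y ∈ Q, y ∉ P := by
        intro Q hQ
        have : ¬Q ≤ P := hinc Q (Finset.mem_insert_of_mem hQ) P
          (Finset.mem_insert_self _ _) (fun h => hPS (h ▸ hQ))
        exact SetLike.not_le_iff_exists.mp this
      choose f hf1 hf2 using hQP
      set s : R := ∏ Q ∈ S.attach, f Q.1 Q.2 with hs
      have hsQ : ∀ Q ∈ S, s ∈ Q := by
        intro Q hQ
        obtain ⟨c, hc⟩ := Finset.dvd_prod_of_mem (fun Q : {x // x ∈ S} => f Q.1 Q.2)
          (Finset.mem_attach S ⟨Q, hQ⟩)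
        rw [hs, hc]
        exact Ideal.mul_mem_right _ _ (hf1 Q hQ)
      have hsP : s ∉ P := by
        rw [hs]
        intro hmem
        obtain ⟨Q, _, hQ⟩ := Ideal.IsPrime.prod_mem_iff.mp hmem
        exact hf2 Q.1 Q.2 hQ
      refine ⟨t + s, ?_⟩
      intro Q hQ
      rcases Finset.mem_insert.mp hQ with rfl | hQS
      · intro hmem
        have : b * s ∈ Q := by
          have : a + b * (t + s) - (a + b * t) = b * s := by ring
          rw [← this]; exact Ideal.sub_mem _ hmem hcase
        rcases hPp.mem_or_mem this with h | h
        · exact hb Q (Finset.mem_insert_self _ _) h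
        · exact hsP h
      · intro hmem
        apply ht Q hQS
        have : a + b * (t + s) - b * s = a + b * t := by ring
        rw [← this]
        exact Ideal.sub_mem _ hmem (Ideal.mul_mem_left _ _ (hsQ Q hQS))
    · exact ⟨t, fun Q hQ => by
        rcases Finset.mem_insert.mp hQ with rfl | hQS
        · exact hcase
        · exact ht Q hQS⟩

/-- The main inductive construction in Bass's stable range theorem. -/
lemma my_key {R : Type*} [CommRing R] [IsNoetherianRing R] {n : ℕ} (c : Fin n → R) (b : R) :
    ∀ k : ℕ, k ≤ n → ∃ x : Fin n → R,
      ∀ Q ∈ (Ideal.span ((fun i => c i + b * x i) '' {i : Fin n | (i : ℕ) < k})).minimalPrimes,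
        b ∉ Q → ∃ p : LTSeries (PrimeSpectrum R), p.length = k ∧ p.last.asIdeal = Q := by
  classical
  intro k
  induction k with
  | zero =>
    intro _
    refine ⟨0, fun Q hQ _ => ?_⟩
    have hQp : Q.IsPrime := hQ.1.1
    exact ⟨RelSeries.singleton _ ⟨Q, hQp⟩, rfl, rfl⟩
  | succ k ih =>
    intro hk1
    obtain ⟨x, hx⟩ := ih (Nat.le_of_succ_le hk1)
    set I := Ideal.span ((fun i => c i + b * x i) '' {i : Fin n | (i : ℕ) < k}) with hI
    set Sset : Set (Ideal R) := {P ∈ I.minimalPrimes | b ∉ P} with hSset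
    have hSfin : Sset.Finite := (my_minimalPrimes_finite I).subset (fun P hP => hP.1)
    have hkn : k < n := hk1
    obtain ⟨t, ht⟩ := my_avoid b (c ⟨k, hkn⟩) hSfin.toFinset
      (fun P hP => ((hSfin.mem_toFinset.mp hP).1).1.1)
      (fun P hP Q hQ hne hle => by
        have hPm := (hSfin.mem_toFinset.mp hP).1
        have hQm := (hSfin.mem_toFinset.mp hQ).1
        exact hne (le_antisymm hle (hQm.2 hPm.1 hle)))
      (fun P hP => (hSfin.mem_toFinset.mp hP).2)
    set x' : Fin n → R := Function.update x ⟨k, hkn⟩ t with hx'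
    refine ⟨x', ?_⟩
    have hagree : ∀ i : Fin n, (i : ℕ) < k → c i + b * x' i = c i + b * x i := by
      intro i hi
      have : i ≠ ⟨k, hkn⟩ := by
        intro h; rw [h] at hi; exact absurd hi (lt_irrefl k)
      rw [hx', Function.update_of_ne this]
    have himg : (fun i => c i + b * x' i) '' {i : Fin n | (i : ℕ) < k}
        = (fun i => c i + b * x i) '' {i : Fin n | (i : ℕ) < k} :=
      Set.image_congr (fun i hi => hagree i hi)
    have hsetsucc : {i : Fin n | (i : ℕ) < k + 1} = insert ⟨k, hkn⟩ {i : Fin n | (i : ℕ) < k} := by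
      ext i
      simp only [Set.mem_setOf_eq, Set.mem_insert_iff, Fin.ext_iff]
      omega
    have hxk : c ⟨k, hkn⟩ + b * x' ⟨k, hkn⟩ = c ⟨k, hkn⟩ + b * t := by
      rw [hx', Function.update_self]
    set e : R := c ⟨k, hkn⟩ + b * t with he
    have hImg' : (fun i => c i + b * x' i) '' {i : Fin n | (i : ℕ) < k + 1}
        = insert e ((fun i => c i + b * x i) '' {i : Fin n | (i : ℕ) < k}) := by
      rw [hsetsucc, Set.image_insert_eq, hxk, himg]
    intro Q hQ hbQ
    rw [hImg'] at hQ
    haveI hQp : Q.IsPrime := hQ.1.1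
    have hIQ : I ≤ Q := le_trans (Ideal.span_mono (Set.subset_insert _ _)) hQ.1.2
    obtain ⟨Q', hQ'm, hQ'le⟩ := Ideal.exists_minimalPrimes_le hIQ
    have hbQ' : b ∉ Q' := fun h => hbQ (hQ'le h)
    obtain ⟨p, hplen, hplast⟩ := hx Q' hQ'm hbQ'
    have heQ : e ∈ Q := hQ.1.2 (Ideal.subset_span (Set.mem_insert _ _))
    have heQ' : e ∉ Q' := ht Q' (hSfin.mem_toFinset.mpr ⟨hQ'm, hbQ'⟩)
    have hlt : Q' < Q := lt_of_le_of_ne hQ'le (fun h => heQ' (h ▸ heQ))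
    haveI hQ'p : Q'.IsPrime := hQ'm.1.1
    have hltPS : p.last < (⟨Q, hQp⟩ : PrimeSpectrum R) := by
      rw [← PrimeSpectrum.asIdeal_lt_asIdeal, hplast]
      exact hlt
    refine ⟨p.snoc ⟨Q, hQp⟩ hltPS, ?_, ?_⟩
    · simp [RelSeries.snoc_length, hplen]
    · rw [RelSeries.last_snoc]

/-- **Bass.** A commutative Noetherian ring of Krull dimension `d` has stable
dimension at most `d`, i.e. it satisfies the stable range condition `(R_{d+1})`. -/
theorem stableRange_of_noetherian_of_krullDim_le
    (R : Type*) [CommRing R] [IsNoetherianRing R] (d : ℕ)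
    (hdim : ringKrullDim R = d) :
    SatisfiesStableRange R (d + 1) := by
  intro a ha
  obtain ⟨x, hx⟩ := my_key (n := d + 1) (fun i => a i.castSucc) (a (Fin.last (d + 1)))
    (d + 1) le_rfl
  refine ⟨x, ?_⟩
  set b : R := a (Fin.last (d + 1)) with hb
  set f : Fin (d + 1) → R := fun i => a i.castSucc + b * x i with hf
  have hsetuniv : {i : Fin (d + 1) | (i : ℕ) < d + 1} = Set.univ := by
    ext i; simp [i.isLt, Nat.lt_succ_iff.mp i.isLt]
  have hspan : Ideal.span (Set.range f) = ⊤ := by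
    by_contra hne
    obtain ⟨M, hM, hMle⟩ := Ideal.exists_le_maximal _ hne
    have hbM : b ∉ M := by
      intro hbmem
      have hall : ∀ j : Fin (d + 2), a j ∈ M := by
        intro j
        refine Fin.lastCases ?_ ?_ j
        · exact hbmem
        · intro i
          have h1 : f i ∈ M := hMle (Ideal.subset_span ⟨i, rfl⟩)
          have h2 : b * x i ∈ M := Ideal.mul_mem_right _ _ hbmem
          have h3 : f i - b * x i = a i.castSucc := by rw [hf]; ring
          rw [← h3]
          exact Ideal.sub_mem _ h1 h2
      obtain ⟨y, hy⟩ := ha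
      have : (1 : R) ∈ M := by
        rw [← hy]
        exact Ideal.sum_mem _ (fun j _ => Ideal.mul_mem_right _ _ (hall j))
      exact hM.ne_top (Ideal.eq_top_iff_one M |>.mpr this)
    haveI := hM.isPrime
    have hspanle : Ideal.span (f '' {i : Fin (d + 1) | (i : ℕ) < d + 1}) ≤ M := by
      rw [hsetuniv, Set.image_univ]
      exact hMle
    obtain ⟨Q', hQ'm, hQ'le⟩ := Ideal.exists_minimalPrimes_le hspanle
    have hbQ' : b ∉ Q' := fun h => hbM (hQ'le h)
    obtain ⟨p, hplen, _⟩ := hx Q' hQ'm hbQ'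
    have hle := Order.LTSeries.length_le_krullDim p
    rw [hplen] at hle
    rw [show Order.krullDim (PrimeSpectrum R) = ringKrullDim R from rfl, hdim] at hle
    have h4 : ((d + 1 : ℕ) : WithBot ℕ∞) ≤ (d : WithBot ℕ∞) := by exact_mod_cast hle
    have h5 : d + 1 ≤ d := by exact_mod_cast h4
    omega
  have h1 : (1 : R) ∈ Ideal.span (Set.range f) := by rw [hspan]; trivial
  obtain ⟨y, hy⟩ := (Submodule.mem_span_range_iff_exists_fun R).mp h1
  refine ⟨y, ?_⟩
  rw [← hy]
  exact Finset.sum_congr rfl (fun i _ => by rw [smul_eq_mul, mul_comm])
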